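/- Let c ∈ ℂ with B(c) ≠ 0 and Δ(c) ≠ 0, and suppose g⁺(c) ≠ 0. Set u = g⁻(c)/g⁺(c) and v = (A(c) + √Δ(c))/(A(c) − √Δ(c)). Then for each n ≥ 1, W_n(c) = 0 if and only if u = v^n. -/

import Mathlib

theorem stmt_6 (A B : Polynomial ℂ) (W : ℕ → Polynomial ℂ) (hW0 : W 0 = 1)
    (hrec : ∀ n, 2 ≤ n → W n = A * W (n - 1) + B * W (n - 2))
    (c s : ℂ) (hB : B.eval c ≠ 0)
    (hΔ : A.eval c ^ 2 + 4 * B.eval c ≠ 0)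
    (hs : s ^ 2 = A.eval c ^ 2 + 4 * B.eval c)
    (hg : (2 * (W 1).eval c - A.eval c + s) / 2 ≠ 0) :
    ∀ n, 1 ≤ n →
      ((W n).eval c = 0 ↔
        ((2 * (W 1).eval c - A.eval c - s) / 2) / ((2 * (W 1).eval c - A.eval c + s) / 2)
          = ((A.eval c + s) / (A.eval c - s)) ^ n) := by
  set a := A.eval c with ha
  set b := B.eval c with hb
  set w := (W 1).eval c with hw
  set α : ℂ := (a + s) / 2 with hα
  set β : ℂ := (a - s) / 2 with hβ
  set gp : ℂ := (2 * w - a + s) / 2 with hgp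
  set gm : ℂ := (2 * w - a - s) / 2 with hgm
  have hs0 : s ≠ 0 := by
    intro h
    apply hΔ
    rw [← hs, h]; ring
  have hprod : (a + s) * (a - s) = -(4 * b) := by linear_combination -hs
  have hms : a - s ≠ 0 := by
    intro h
    apply hB
    have : (a + s) * 0 = -(4 * b) := by rw [← h]; exact hprod
    simpa using this.symm
  have hps : a + s ≠ 0 := by
    intro h
    apply hB
    have : (0 : ℂ) * (a - s) = -(4 * b) := by rw [← h]; exact hprod
    simpa using this.symm
  have hα2 : α ^ 2 = a * α + b := by
    rw [hα]; field_simp; linear_combination hs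
  have hβ2 : β ^ 2 = a * β + b := by
    rw [hβ]; field_simp; linear_combination hs
  have key : ∀ n, s * (W n).eval c = gp * α ^ n - gm * β ^ n := by
    intro n
    induction n using Nat.strong_induction_on with
    | _ n ih =>
      match n with
      | 0 => simp [hW0, hgp, hgm]; ring
      | 1 => simp [hgp, hgm, hα, hβ, ← hw]; field_simp; ring
      | (m + 2) =>
        have h1 := ih (m + 1) (by omega)
        have h2 := ih m (by omega)
        rw [hrec (m + 2) (by omega)]
        have e1 : m + 2 - 1 = m + 1 := by omega
        have e2 : m + 2 - 2 = m := by omega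
        rw [e1, e2]
        simp only [Polynomial.eval_add, Polynomial.eval_mul, ← ha, ← hb]
        have pα : α ^ (m + 2) = α ^ m * α ^ 2 := by ring
        have pβ : β ^ (m + 2) = β ^ m * β ^ 2 := by ring
        rw [pα, pβ, hα2, hβ2]
        linear_combination a * h1 + b * h2
  intro n hn
  have hkey := key n
  constructor
  · intro h0
    rw [h0, mul_zero] at hkey
    have heq : gp * α ^ n = gm * β ^ n := by linear_combination -hkey
    rw [div_pow, div_eq_div_iff hg (pow_ne_zero n hms)]
    have hα0 : α ≠ 0 := div_ne_zero hps two_ne_zero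
    have hβ0 : β ≠ 0 := div_ne_zero hms two_ne_zero
    -- gm * (a-s)^n = (a+s)^n * gp follows from heq by multiplying by 2^n
    have h2n : (2:ℂ) ^ n ≠ 0 := pow_ne_zero n two_ne_zero
    have : gp * ((a + s) ^ n / 2 ^ n) = gm * ((a - s) ^ n / 2 ^ n) := by
      rw [← div_pow, ← div_pow]; exact heq
    field_simp at this
    linear_combination -this
  · intro hv
    rw [div_pow, div_eq_div_iff hg (pow_ne_zero n hms)] at hv
    -- hv : gm * (a+s)^n⁻... : gm * ... = ...
    have heq : gp * α ^ n = gm * β ^ n := by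
      rw [hα, hβ, div_pow, div_pow]
      field_simp
      linear_combination -hv
    have : s * (W n).eval c = 0 := by rw [hkey, heq]; ring
    rcases mul_eq_zero.mp this with h | h
    · exact absurd h hs0
    · exact h
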